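/- Let A be a unital C*-algebra, let q be a real number with 0 < q < 1, and let p, t ∈ A satisfy p* = p and t*·t = q⁻⁴(p − p²). Then the spectrum of p is contained in the real interval [0,1]; in particular ‖p‖ ≤ 1. -/

import Mathlib

/-- In a unital C*-algebra, if `p* = p` and `t* t = q⁻⁴ (p - p²)` for some
`0 < q < 1`, then the spectrum of `p` is contained in the real interval `[0,1]`; in particular
`‖p‖ ≤ 1`. -/
theorem stmt8 {A : Type*} [NormedRing A] [StarRing A] [CStarRing A] [CompleteSpace A]
    [NormedAlgebra ℂ A] [StarModule ℂ A] (q : ℝ) (hq0 : 0 < q) (hq1 : q < 1)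
    (p t : A) (hp : star p = p)
    (ht : star t * t = (((q : ℂ) ^ 4)⁻¹) • (p - p * p)) :
    spectrum ℂ p ⊆ Complex.ofReal '' Set.Icc (0 : ℝ) 1 ∧ ‖p‖ ≤ 1 := by
  have hp' : IsSelfAdjoint p := hp
  letI : CStarAlgebra A := {}
  have hq4 : ((q : ℂ) ^ 4) ≠ 0 :=
    pow_ne_zero _ (by exact_mod_cast hq0.ne')
  -- p - p*p = star s * s for s = q² • t
  set s : A := ((q : ℂ) ^ 2) • t with hs
  have key : star s * s = p - p * p := by
    rw [hs, star_smul, smul_mul_assoc, mul_smul_comm, ht, smul_smul, smul_smul]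
    rw [show star ((q : ℂ) ^ 2) * ((q : ℂ) ^ 2) * ((q : ℂ) ^ 4)⁻¹ = 1 by
      rw [star_pow, Complex.star_def, Complex.conj_ofReal]
      field_simp [Complex.ofReal_ne_zero.mpr hq0.ne']]
    simp
  have hnonneg : ∀ x ∈ spectrum ℝ (p - p * p), 0 ≤ x := by
    rw [← key]; exact spectrum_star_mul_self_nonneg
  -- spectrum inclusion
  have hsub : spectrum ℂ p ⊆ Complex.ofReal '' Set.Icc (0 : ℝ) 1 := by
    intro z hz
    have hzre : z = (z.re : ℂ) := hp'.mem_spectrum_eq_re hz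
    -- spectral mapping: z - z² ∈ spectrum ℂ (p - p*p)
    have hmap : z - z * z ∈ spectrum ℂ (p - p * p) := by
      have := spectrum.subset_polynomial_aeval p
        (Polynomial.X - Polynomial.X * Polynomial.X : Polynomial ℂ)
        ⟨z, hz, rfl⟩
      simpa using this
    have hre : (z.re - z.re * z.re : ℝ) ∈ spectrum ℝ (p - p * p) := by
      have hsa : IsSelfAdjoint (p - p * p) := by
        rw [← key]; exact IsSelfAdjoint.star_mul_self s
      rw [← hsa.coe_mem_spectrum_complex]
      have : ((z.re - z.re * z.re : ℝ) : ℂ) = z - z * z := by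
        rw [Complex.ofReal_sub, Complex.ofReal_mul, ← hzre]
      rw [this]
      exact hmap
    have h0 : 0 ≤ z.re - z.re * z.re := hnonneg _ hre
    refine ⟨z.re, ⟨?_, ?_⟩, hzre.symm⟩
    · nlinarith [sq_nonneg z.re]
    · nlinarith [sq_nonneg (z.re - 1)]
  refine ⟨hsub, ?_⟩
  -- norm bound via spectral radius
  have hrad : spectralRadius ℂ p = ‖p‖₊ := hp'.spectralRadius_eq_nnnorm
  have hle : spectralRadius ℂ p ≤ 1 := by
    rw [spectralRadius]
    refine iSup₂_le fun z hz => ?_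
    obtain ⟨r, ⟨hr0, hr1⟩, rfl⟩ := hsub hz
    rw [Complex.nnnorm_real]
    rw [show (1 : ENNReal) = ((1 : NNReal) : ENNReal) from rfl, ENNReal.coe_le_coe]
    rw [← NNReal.coe_le_coe]
    simpa [abs_of_nonneg hr0] using hr1
  rw [hrad] at hle
  have : ‖p‖₊ ≤ 1 := by exact_mod_cast hle
  exact_mod_cast this
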